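/- Let G be a connected acyclic simple graph in which every vertex has countably infinite degree. Let a be a vertex and S a finite set of vertices. If the orbit { f a | f is a graph automorphism of G fixing every element of S } is infinite, then there exists a vertex b adjacent to a such that the orbit { f a | f is a graph automorphism of G fixing b and every element of S } is infinite. -/

import Mathlib

namespace TreeOrbitAux
open SimpleGraph

variable {V : Type*} {G : SimpleGraph V}

/-- In a tree, every path realizes the distance. -/
lemma path_length_eq_dist (hconn : G.Connected) (hacyc : G.IsAcyclic) {u v : V}
    (p : G.Walk u v) (hp : p.IsPath) : p.length = G.dist u v := by
  classical
  obtain ⟨q, hq, hlen⟩ := (hconn u v).exists_path_of_dist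
  have : (⟨p, hp⟩ : G.Path u v) = ⟨q, hq⟩ := hacyc.path_unique _ _
  rw [← hlen]
  exact congrArg SimpleGraph.Walk.length (congrArg Subtype.val this)

/-- In a tree, adjacent vertices have different distances to any root. -/
lemma adj_dist_ne (hconn : G.Connected) (hacyc : G.IsAcyclic) (r : V) {u v : V}
    (h : G.Adj u v) : G.dist r u ≠ G.dist r v := by
  classical
  intro he
  obtain ⟨p, hp, hlen⟩ := (hconn r u).exists_path_of_dist
  by_cases hv : v ∈ p.support
  · have hts := p.take_spec hv
    have h1 : (p.takeUntil v hv).length = G.dist r v :=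
      path_length_eq_dist hconn hacyc _ (hp.takeUntil hv)
    have h2 : (p.takeUntil v hv).length + (p.dropUntil v hv).length = p.length := by
      rw [← SimpleGraph.Walk.length_append, hts]
    have h3 : (p.dropUntil v hv).length = 0 := by omega
    exact h.ne' (SimpleGraph.Walk.eq_of_length_eq_zero h3)
  · have hcp : (p.concat h).IsPath := by
      rw [← SimpleGraph.Walk.isPath_reverse_iff, SimpleGraph.Walk.reverse_concat]
      exact (hp.reverse).cons (by rwa [SimpleGraph.Walk.support_reverse, List.mem_reverse])
        (h := h.symm)
    have := path_length_eq_dist hconn hacyc _ hcp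
    rw [SimpleGraph.Walk.length_concat] at this
    omega

/-- In a tree, the neighbor on the geodesic toward the root is unique. -/
lemma parent_unique (hconn : G.Connected) (hacyc : G.IsAcyclic) (r : V) {u u' v : V}
    (h : G.Adj u v) (h' : G.Adj u' v)
    (hd : G.dist r u + 1 = G.dist r v) (hd' : G.dist r u' + 1 = G.dist r v) : u = u' := by
  classical
  have key : ∀ (w : V) (hw : G.Adj w v) (_ : G.dist r w + 1 = G.dist r v)
      (p : G.Walk r w) (hp : p.IsPath) (hl : p.length = G.dist r w), v ∉ p.support := by
    intro w hw hdw p hp hl hv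
    have h1 : (p.takeUntil v hv).length = G.dist r v :=
      path_length_eq_dist hconn hacyc _ (hp.takeUntil hv)
    have := p.length_takeUntil_le hv
    omega
  obtain ⟨p, hp, hlen⟩ := (hconn r u).exists_path_of_dist
  obtain ⟨p', hp', hlen'⟩ := (hconn r u').exists_path_of_dist
  have hv : v ∉ p.support := key u h hd p hp hlen
  have hv' : v ∉ p'.support := key u' h' hd' p' hp' hlen'
  have hcp : (p.concat h).IsPath := by
    rw [← SimpleGraph.Walk.isPath_reverse_iff, SimpleGraph.Walk.reverse_concat]
    exact (hp.reverse).cons (by rwa [SimpleGraph.Walk.support_reverse, List.mem_reverse])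
      (h := h.symm)
  have hcp' : (p'.concat h').IsPath := by
    rw [← SimpleGraph.Walk.isPath_reverse_iff, SimpleGraph.Walk.reverse_concat]
    exact (hp'.reverse).cons (by rwa [SimpleGraph.Walk.support_reverse, List.mem_reverse])
      (h := h'.symm)
  have heq : ((⟨p.concat h, hcp⟩ : G.Path r v) : G.Walk r v) = (⟨p'.concat h', hcp'⟩ : G.Path r v) :=
    congrArg Subtype.val (hacyc.path_unique _ _)
  obtain ⟨hv, -⟩ := SimpleGraph.Walk.concat_inj heq
  exact hv

/-- Adjacent vertices: distance to root changes by exactly one. -/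
lemma adj_dist_succ (hconn : G.Connected) (hacyc : G.IsAcyclic) (r : V) {u v : V}
    (h : G.Adj u v) : G.dist r u + 1 = G.dist r v ∨ G.dist r v + 1 = G.dist r u := by
  have h1 : G.dist u v = 1 := SimpleGraph.dist_eq_one_iff_adj.2 h
  have t1 : G.dist r v ≤ G.dist r u + 1 := by
    have := hconn.dist_triangle (u := r) (v := u) (w := v); omega
  have t2 : G.dist r u ≤ G.dist r v + 1 := by
    have := hconn.dist_triangle (u := r) (v := v) (w := u)
    have h2 : G.dist v u = 1 := SimpleGraph.dist_eq_one_iff_adj.2 h.symm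
    omega
  have := adj_dist_ne hconn hacyc r h
  omega

/-- Graph isomorphisms preserve distances. -/
lemma iso_dist (hconn : G.Connected) (f : G ≃g G) (u v : V) :
    G.dist (f u) (f v) = G.dist u v := by
  have key : ∀ (g : G ≃g G) (x y : V), G.dist (g x) (g y) ≤ G.dist x y := by
    intro g x y
    obtain ⟨p, hlen⟩ := (hconn x y).exists_walk_length_eq_dist
    have := SimpleGraph.dist_le (p.map g.toHom)
    rwa [SimpleGraph.Walk.length_map, hlen] at this
  refine le_antisymm (key f u v) ?_
  have := key f.symm (f u) (f v)
  simpa using this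



variable (G) in
def childSet (v : V) (po : Option V) : Set V := {w | G.Adj v w ∧ po ≠ some w}

section
variable (hdeg : ∀ v : V, Countable (G.neighborSet v) ∧ Infinite (G.neighborSet v))

noncomputable def adjEquiv (v : V) (po : Option V) : ℕ ≃ ↥(childSet G v po) := by
  haveI : Countable ↥(childSet G v po) := by
    rw [Set.countable_coe_iff]
    have h1 : (G.neighborSet v).Countable := by
      rw [← Set.countable_coe_iff]; exact (hdeg v).1
    exact h1.mono (fun w hw => hw.1)
  haveI : Infinite ↥(childSet G v po) := by
    rw [Set.infinite_coe_iff]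
    have h1 : (G.neighborSet v).Infinite := by
      rw [← Set.infinite_coe_iff]; exact (hdeg v).2
    have h2 : ({w : V | po = some w}).Finite := by
      apply Set.Subsingleton.finite
      intro x hx y hy
      simp only [Set.mem_setOf_eq] at hx hy
      rw [hx] at hy; exact (Option.some_injective V hy)
    have h3 : childSet G v po = G.neighborSet v \ {w : V | po = some w} := by
      ext w; simp [childSet, neighborSet, Set.mem_diff]
    rw [h3]
    exact h1.diff h2
  exact ((nonempty_denumerable _).some.eqv).symm

noncomputable def stepFn : Option V × V → ℕ → Option V × V :=
  fun s n => (some s.2, ((adjEquiv hdeg s.2 s.1 n : V)))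

noncomputable def chain (r : V) (l : List ℕ) : Option V × V := l.foldl (stepFn hdeg) (none, r)

noncomputable def phi (r : V) (l : List ℕ) : V := (chain hdeg r l).2

lemma chain_nil (r : V) : chain hdeg r [] = (none, r) := rfl

lemma phi_nil (r : V) : phi hdeg r [] = r := rfl

lemma chain_append (r : V) (l : List ℕ) (n : ℕ) :
    chain hdeg r (l ++ [n]) = stepFn hdeg (chain hdeg r l) n := by
  simp [chain, List.foldl_append]

lemma phi_append (r : V) (l : List ℕ) (n : ℕ) :
    phi hdeg r (l ++ [n]) = (adjEquiv hdeg (phi hdeg r l) (chain hdeg r l).1 n : V) := by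
  simp [phi, chain_append, stepFn]
  rfl

lemma chain_append_fst (r : V) (l : List ℕ) (n : ℕ) :
    (chain hdeg r (l ++ [n])).1 = some (phi hdeg r l) := by
  simp [phi, chain_append, stepFn]

lemma adj_phi_append (r : V) (l : List ℕ) (n : ℕ) :
    G.Adj (phi hdeg r l) (phi hdeg r (l ++ [n])) := by
  rw [phi_append]
  exact (adjEquiv hdeg (phi hdeg r l) (chain hdeg r l).1 n).2.1

variable (G) in
def Good (r : V) (k : ℕ) (s : Option V × V) : Prop :=
  G.dist r s.2 = k ∧ (s.1 = none → s.2 = r) ∧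
    (∀ p, s.1 = some p → G.Adj s.2 p ∧ G.dist r p + 1 = k) ∧ (k ≠ 0 → s.1 ≠ none)

lemma chain_good (hconn : G.Connected) (hacyc : G.IsAcyclic) (r : V) :
    ∀ l : List ℕ, Good G r l.length (chain hdeg r l) := by
  intro l
  induction l using List.reverseRecOn with
  | nil =>
    refine ⟨SimpleGraph.dist_self, fun _ => rfl, fun p hp => by simp [chain_nil] at hp,
      fun h => absurd rfl h⟩
  | append_singleton t n ih =>
    obtain ⟨hd, hnone, hsome, hk⟩ := ih
    set s := chain hdeg r t with hs
    set e := adjEquiv hdeg s.2 s.1 n with he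
    have he1 : G.Adj s.2 (e : V) := e.2.1
    have he2 : s.1 ≠ some (e : V) := e.2.2
    have hne : (e : V) ≠ s.2 := he1.ne'
    have hch : chain hdeg r (t ++ [n]) = (some s.2, (e : V)) := chain_append hdeg r t n
    have hdist : G.dist r (e : V) = t.length + 1 := by
      rcases adj_dist_succ hconn hacyc r he1 with hc | hc
      · -- dist r s.2 + 1 = dist r e
        omega
      · -- dist r e + 1 = dist r s.2 : impossible
        exfalso
        by_cases hk0 : t.length = 0
        · omega
        · have hsome' := hk hk0
          cases hpo : s.1 with
          | none => exact hsome' hpo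
          | some p =>
            obtain ⟨hap, hdp⟩ := hsome p hpo
            have : (e : V) = p :=
              parent_unique hconn hacyc r he1.symm hap.symm (by omega) (by omega)
            exact he2 (hpo.trans (congrArg _ this.symm))
    rw [hch]
    refine ⟨by simpa using hdist, by simp, ?_, by simp⟩
    intro p hp
    simp only [Option.some.injEq] at hp
    subst hp
    exact ⟨he1.symm, by simp; omega⟩

lemma dist_phi (hconn : G.Connected) (hacyc : G.IsAcyclic) (r : V) (l : List ℕ) :
    G.dist r (phi hdeg r l) = l.length := (chain_good hdeg hconn hacyc r l).1

lemma phi_inj (hconn : G.Connected) (hacyc : G.IsAcyclic) (r : V) :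
    Function.Injective (phi hdeg r) := by
  have key : ∀ k (l₁ l₂ : List ℕ), l₁.length = k → l₂.length = k →
      phi hdeg r l₁ = phi hdeg r l₂ → l₁ = l₂ := by
    intro k
    induction k with
    | zero =>
      intro l₁ l₂ h1 h2 _
      rw [List.length_eq_zero_iff] at h1 h2; rw [h1, h2]
    | succ j ih =>
      intro l₁ l₂ h1 h2 heq
      rcases l₁.eq_nil_or_concat' with rfl | ⟨t₁, b₁, rfl⟩
      · simp at h1
      rcases l₂.eq_nil_or_concat' with rfl | ⟨t₂, b₂, rfl⟩
      · simp at h2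
      have g1 := chain_good hdeg hconn hacyc r (t₁ ++ [b₁])
      have g2 := chain_good hdeg hconn hacyc r (t₂ ++ [b₂])
      have ha1 : G.Adj (phi hdeg r (t₁ ++ [b₁])) (phi hdeg r t₁) :=
        (g1.2.2.1 (phi hdeg r t₁) (chain_append_fst hdeg r t₁ b₁)).1
      have hd1 : G.dist r (phi hdeg r t₁) + 1 = (t₁ ++ [b₁]).length :=
        (g1.2.2.1 (phi hdeg r t₁) (chain_append_fst hdeg r t₁ b₁)).2
      have ha2 : G.Adj (phi hdeg r (t₂ ++ [b₂])) (phi hdeg r t₂) :=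
        (g2.2.2.1 (phi hdeg r t₂) (chain_append_fst hdeg r t₂ b₂)).1
      have hd2 : G.dist r (phi hdeg r t₂) + 1 = (t₂ ++ [b₂]).length :=
        (g2.2.2.1 (phi hdeg r t₂) (chain_append_fst hdeg r t₂ b₂)).2
      rw [heq] at ha1
      have hdl2 : G.dist r (phi hdeg r (t₂ ++ [b₂])) = (t₂ ++ [b₂]).length :=
        dist_phi hdeg hconn hacyc r (t₂ ++ [b₂])
      have hteq : phi hdeg r t₁ = phi hdeg r t₂ :=
        parent_unique hconn hacyc r ha1.symm ha2.symm (by omega) (by omega)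
      have ht : t₁ = t₂ := ih t₁ t₂ (by simp at h1; omega) (by simp at h2; omega) hteq
      subst ht
      have hpo : (chain hdeg r t₁).1 = (chain hdeg r t₁).1 := rfl
      have hb : ((adjEquiv hdeg (phi hdeg r t₁) (chain hdeg r t₁).1 b₁ : V))
          = ((adjEquiv hdeg (phi hdeg r t₁) (chain hdeg r t₁).1 b₂ : V)) := by
        rw [← phi_append, ← phi_append]; exact heq
      have : b₁ = b₂ := (adjEquiv hdeg (phi hdeg r t₁) (chain hdeg r t₁).1).injective
        (Subtype.coe_injective hb)
      rw [this]
  intro l₁ l₂ h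
  have : l₂.length = l₁.length := by
    rw [← dist_phi hdeg hconn hacyc r, ← dist_phi hdeg hconn hacyc r, h]
  exact key l₁.length l₁ l₂ rfl this h

lemma phi_surj (hconn : G.Connected) (hacyc : G.IsAcyclic) (r : V) :
    Function.Surjective (phi hdeg r) := by
  have key : ∀ k (v : V), G.dist r v = k → ∃ l, phi hdeg r l = v := by
    intro k
    induction k using Nat.strong_induction_on with
    | _ k ih =>
      intro v hv
      rcases Nat.eq_zero_or_pos k with rfl | hk
      · exact ⟨[], (hconn.dist_eq_zero_iff).1 hv⟩
      · have hvr : v ≠ r := by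
          intro h; rw [h, SimpleGraph.dist_self] at hv; omega
        obtain ⟨p, hp, hlen⟩ := (hconn r v).exists_path_of_dist
        obtain ⟨u₀, hadj, q, hq⟩ := SimpleGraph.Walk.exists_eq_cons_of_ne hvr p.reverse
        have hqp : q.IsPath := by
          have := hp.reverse; rw [hq] at this
          exact this.of_cons
        have hdu : G.dist r u₀ = k - 1 := by
          have h1 : q.reverse.length = G.dist r u₀ :=
            path_length_eq_dist hconn hacyc q.reverse hqp.reverse
          have h2 : p.reverse.length = q.length + 1 := by rw [hq]; simp
          rw [SimpleGraph.Walk.length_reverse] at h1 h2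
          omega
        obtain ⟨t, ht⟩ := ih (k - 1) (by omega) u₀ hdu
        have htl : t.length = k - 1 := by
          rw [← dist_phi hdeg hconn hacyc r t, ht]; exact hdu
        have hmem : v ∈ childSet G (phi hdeg r t) (chain hdeg r t).1 := by
          constructor
          · rw [ht]; exact hadj.symm
          · cases hpo : (chain hdeg r t).1 with
            | none => simp
            | some pp =>
              have := (chain_good hdeg hconn hacyc r t).2.2.1 pp hpo
              intro hc
              have hppv : pp = v := by injection hc
              rw [hppv] at this
              omega
        refine ⟨t ++ [(adjEquiv hdeg (phi hdeg r t) (chain hdeg r t).1).symm ⟨v, hmem⟩], ?_⟩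
        rw [phi_append, Equiv.apply_symm_apply]
  intro v
  exact key (G.dist r v) v rfl

def MAdj (l₁ l₂ : List ℕ) : Prop := (∃ n, l₂ = l₁ ++ [n]) ∨ (∃ n, l₁ = l₂ ++ [n])

lemma adj_of_madj (r : V) {l₁ l₂ : List ℕ} (h : MAdj l₁ l₂) :
    G.Adj (phi hdeg r l₁) (phi hdeg r l₂) := by
  rcases h with ⟨n, rfl⟩ | ⟨n, rfl⟩
  · exact adj_phi_append hdeg r l₁ n
  · exact (adj_phi_append hdeg r l₂ n).symm

lemma madj_of_adj (hconn : G.Connected) (hacyc : G.IsAcyclic) (r : V) {l₁ l₂ : List ℕ}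
    (h : G.Adj (phi hdeg r l₁) (phi hdeg r l₂)) : MAdj l₁ l₂ := by
  have hd1 : G.dist r (phi hdeg r l₁) = l₁.length := dist_phi hdeg hconn hacyc r l₁
  have hd2 : G.dist r (phi hdeg r l₂) = l₂.length := dist_phi hdeg hconn hacyc r l₂
  rcases adj_dist_succ hconn hacyc r h with hc | hc
  · left
    rcases l₂.eq_nil_or_concat' with rfl | ⟨t, b, rfl⟩
    · exfalso; simp only [List.length_nil] at hd2; omega
    have ha : G.Adj (phi hdeg r (t ++ [b])) (phi hdeg r t) :=
      ((chain_good hdeg hconn hacyc r (t ++ [b])).2.2.1 (phi hdeg r t)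
        (chain_append_fst hdeg r t b)).1
    have hdt : G.dist r (phi hdeg r t) = t.length := dist_phi hdeg hconn hacyc r t
    have hteq : phi hdeg r t = phi hdeg r l₁ := by
      refine parent_unique hconn hacyc r ha.symm h ?_ ?_ <;> simp at hd2 ⊢ <;> omega
    exact ⟨b, by rw [phi_inj hdeg hconn hacyc r hteq]⟩
  · right
    rcases l₁.eq_nil_or_concat' with rfl | ⟨t, b, rfl⟩
    · exfalso; simp only [List.length_nil] at hd1; omega
    have ha : G.Adj (phi hdeg r (t ++ [b])) (phi hdeg r t) :=
      ((chain_good hdeg hconn hacyc r (t ++ [b])).2.2.1 (phi hdeg r t)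
        (chain_append_fst hdeg r t b)).1
    have hdt : G.dist r (phi hdeg r t) = t.length := dist_phi hdeg hconn hacyc r t
    have hteq : phi hdeg r t = phi hdeg r l₂ := by
      refine parent_unique hconn hacyc r ha.symm h.symm ?_ ?_ <;> simp at hd1 ⊢ <;> omega
    exact ⟨b, by rw [phi_inj hdeg hconn hacyc r hteq]⟩

lemma exists_walk_phi (r : V) :
    ∀ (l₂ l₁ : List ℕ), ∃ w : G.Walk (phi hdeg r l₁) (phi hdeg r (l₁ ++ l₂)),
      w.length = l₂.length := by
  intro l₂
  induction l₂ with
  | nil =>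
    intro l₁
    exact ⟨(SimpleGraph.Walk.nil).copy rfl (by rw [List.append_nil]), by simp⟩
  | cons n t ih =>
    intro l₁
    obtain ⟨w, hw⟩ := ih (l₁ ++ [n])
    refine ⟨SimpleGraph.Walk.cons (adj_phi_append hdeg r l₁ n)
      (w.copy rfl (by rw [List.append_assoc]; rfl)), by simp [hw]⟩

lemma dist_phi_append (hconn : G.Connected) (hacyc : G.IsAcyclic) (r : V) (l₁ l₂ : List ℕ) :
    G.dist (phi hdeg r l₁) (phi hdeg r (l₁ ++ l₂)) = l₂.length := by
  obtain ⟨w, hw⟩ := exists_walk_phi hdeg r l₂ l₁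
  have le1 : G.dist (phi hdeg r l₁) (phi hdeg r (l₁ ++ l₂)) ≤ l₂.length := by
    rw [← hw]; exact SimpleGraph.dist_le w
  have tri := hconn.dist_triangle (u := r) (v := phi hdeg r l₁) (w := phi hdeg r (l₁ ++ l₂))
  rw [dist_phi hdeg hconn hacyc, dist_phi hdeg hconn hacyc, List.length_append] at tri
  omega

def lswap (π : Equiv.Perm ℕ) : List ℕ → List ℕ
  | [] => []
  | h :: t => π h :: t

lemma lswap_lswap (π : Equiv.Perm ℕ) (l : List ℕ) : lswap π.symm (lswap π l) = l := by
  cases l <;> simp [lswap]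

def lswapEquiv (π : Equiv.Perm ℕ) : List ℕ ≃ List ℕ where
  toFun := lswap π
  invFun := lswap π.symm
  left_inv := lswap_lswap π
  right_inv := fun l => by simpa using lswap_lswap π.symm l

lemma lswap_concat (π : Equiv.Perm ℕ) (l : List ℕ) (n : ℕ) :
    ∃ n', lswap π (l ++ [n]) = lswap π l ++ [n'] := by
  cases l with
  | nil => exact ⟨π n, rfl⟩
  | cons h t => exact ⟨n, rfl⟩

lemma madj_lswap (π : Equiv.Perm ℕ) {l₁ l₂ : List ℕ} (h : MAdj l₁ l₂) :
    MAdj (lswap π l₁) (lswap π l₂) := by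
  rcases h with ⟨n, rfl⟩ | ⟨n, rfl⟩
  · exact Or.inl (lswap_concat π l₁ n)
  · exact Or.inr (lswap_concat π l₂ n)

include hdeg in
lemma master (hconn : G.Connected) (hacyc : G.IsAcyclic) (a r : V) (hadj : G.Adj a r)
    (S : Finset V) (hS : ∀ s ∈ S, G.dist r s + 1 = G.dist a s) :
    {x : V | ∃ f : G ≃g G, f r = r ∧ (∀ s ∈ S, f s = s) ∧ f a = x}.Infinite := by
  classical
  set Φ : List ℕ ≃ V := Equiv.ofBijective (phi hdeg r)
    ⟨phi_inj hdeg hconn hacyc r, phi_surj hdeg hconn hacyc r⟩ with hΦ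
  have hΦapp : ∀ l, Φ l = phi hdeg r l := fun l => rfl
  have hΦr : Φ [] = r := phi_nil hdeg r
  have hda : G.dist r a = 1 := SimpleGraph.dist_eq_one_iff_adj.2 hadj.symm
  have hlen : (Φ.symm a).length = 1 := by
    have h1 := dist_phi hdeg hconn hacyc r (Φ.symm a)
    rw [← hΦapp, Φ.apply_symm_apply] at h1
    omega
  obtain ⟨m, hm⟩ := List.length_eq_one_iff.1 hlen
  have hma : Φ [m] = a := by rw [← hm, Φ.apply_symm_apply]
  set bad : Finset ℕ := insert m (S.image (fun s => (Φ.symm s).headI)) with hbad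
  have adjIff : ∀ (π : Equiv.Perm ℕ) (l₁ l₂ : List ℕ),
      G.Adj (phi hdeg r (lswap π l₁)) (phi hdeg r (lswap π l₂)) ↔
        G.Adj (phi hdeg r l₁) (phi hdeg r l₂) := by
    intro π l₁ l₂
    constructor
    · intro h
      have h2 := madj_lswap π.symm (madj_of_adj hdeg hconn hacyc r h)
      rw [lswap_lswap, lswap_lswap] at h2
      exact adj_of_madj hdeg r h2
    · intro h
      exact adj_of_madj hdeg r (madj_lswap π (madj_of_adj hdeg hconn hacyc r h))
  have key : ∀ k ∉ bad,
      Φ [k] ∈ {x : V | ∃ f : G ≃g G, f r = r ∧ (∀ s ∈ S, f s = s) ∧ f a = x} := by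
    intro k hk
    set π := Equiv.swap m k with hπ
    set f : G ≃g G :=
      { toEquiv := Φ.symm.trans ((lswapEquiv π).trans Φ)
        map_rel_iff' := by
          intro u v
          show G.Adj (Φ (lswap π (Φ.symm u))) (Φ (lswap π (Φ.symm v))) ↔ G.Adj u v
          conv_rhs => rw [← Φ.apply_symm_apply u, ← Φ.apply_symm_apply v]
          exact adjIff π (Φ.symm u) (Φ.symm v) } with hf
    have hfapp : ∀ x, f x = Φ (lswap π (Φ.symm x)) := fun x => rfl
    have hsymm_nil : Φ.symm r = [] := by rw [← hΦr, Equiv.symm_apply_apply]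
    refine ⟨f, ?_, ?_, ?_⟩
    · rw [hfapp, hsymm_nil]; exact hΦr
    · intro s hs
      rw [hfapp]
      rcases hls : Φ.symm s with _ | ⟨h, t⟩
      · show Φ (lswap π []) = s
        rw [show lswap π [] = [] from rfl, ← hls, Φ.apply_symm_apply]
      · show Φ (lswap π (h :: t)) = s
        have hhk : h ≠ k := by
          intro hc
          apply hk
          rw [hbad]
          refine Finset.mem_insert_of_mem ?_
          refine Finset.mem_image.2 ⟨s, hs, ?_⟩
          rw [hls, hc]; rfl
        have hhm : h ≠ m := by
          intro hc
          have hsphi : s = phi hdeg r ([m] ++ t) := by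
            have h1 : s = Φ (h :: t) := by rw [← hls, Φ.apply_symm_apply]
            rw [h1, hc]; rfl
          have hd1 : G.dist a s = t.length := by
            rw [hsphi, ← hma, hΦapp]
            exact dist_phi_append hdeg hconn hacyc r [m] t
          have hd2 : G.dist r s = t.length + 1 := by
            rw [hsphi]
            have := dist_phi hdeg hconn hacyc r ([m] ++ t)
            simpa using this
          have := hS s hs
          omega
        show Φ (π h :: t) = s
        rw [Equiv.swap_apply_of_ne_of_ne hhm hhk, ← hls, Φ.apply_symm_apply]
    · rw [hfapp, hm]
      show Φ (π m :: []) = Φ [k]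
      rw [Equiv.swap_apply_left]
  have hinf : ((↑bad : Set ℕ)ᶜ).Infinite := (bad.finite_toSet).infinite_compl
  have himg : ((fun k => Φ [k]) '' (↑bad)ᶜ).Infinite := by
    refine hinf.image ?_
    intro k₁ _ k₂ _ he
    have h2 : [k₁] = [k₂] := Φ.injective he
    simpa using h2
  refine Set.Infinite.mono ?_ himg
  rintro x ⟨k, hk, rfl⟩
  exact key k (by simpa using hk)

lemma comm_aux {r u v : V} (h : G.dist u r + 1 = G.dist v r) :
    G.dist r u + 1 = G.dist r v := by
  rw [SimpleGraph.dist_comm (u := r) (v := u), SimpleGraph.dist_comm (u := r) (v := v)]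
  exact h

lemma fixed_of_two_gates (hconn : G.Connected) (hacyc : G.IsAcyclic) (f : G ≃g G)
    {a s₁ s₂ y₁ y₂ : V}
    (hf1 : f s₁ = s₁) (hf2 : f s₂ = s₂)
    (hy1 : G.Adj a y₁) (hy2 : G.Adj a y₂) (hne : y₁ ≠ y₂)
    (hg1 : G.dist y₁ s₁ + 1 = G.dist a s₁) (hg2 : G.dist y₂ s₂ + 1 = G.dist a s₂) :
    f a = a := by
  classical
  set d₁ := G.dist a s₁ with hd₁
  set d₂ := G.dist a s₂ with hd₂
  have hs12 : s₁ ≠ s₂ := by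
    intro h
    subst h
    exact hne (parent_unique hconn hacyc s₁ hy1.symm hy2.symm
      (comm_aux (by omega)) (comm_aux (by omega)))
  obtain ⟨p₁, hp₁, hlen₁⟩ := (hconn a s₁).exists_path_of_dist
  obtain ⟨p₂, hp₂, hlen₂⟩ := (hconn a s₂).exists_path_of_dist
  have hdisj : ∀ x, x ∈ p₁.support → x ∈ p₂.support → x = a := by
    intro x hx1 hx2
    by_contra hxa
    have hax : a ≠ x := fun h => hxa h.symm
    have he1t : (p₁.takeUntil x hx1).length = G.dist a x :=
      path_length_eq_dist hconn hacyc _ (hp₁.takeUntil hx1)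
    have he1d : (p₁.dropUntil x hx1).length = G.dist x s₁ :=
      path_length_eq_dist hconn hacyc _ (hp₁.dropUntil hx1)
    have hsum1 : (p₁.takeUntil x hx1).length + (p₁.dropUntil x hx1).length = d₁ := by
      rw [← SimpleGraph.Walk.length_append, p₁.take_spec hx1]; exact hlen₁
    have he2t : (p₂.takeUntil x hx2).length = G.dist a x :=
      path_length_eq_dist hconn hacyc _ (hp₂.takeUntil hx2)
    have he2d : (p₂.dropUntil x hx2).length = G.dist x s₂ :=
      path_length_eq_dist hconn hacyc _ (hp₂.dropUntil hx2)
    have hsum2 : (p₂.takeUntil x hx2).length + (p₂.dropUntil x hx2).length = d₂ := by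
      rw [← SimpleGraph.Walk.length_append, p₂.take_spec hx2]; exact hlen₂
    have hepos : 1 ≤ G.dist a x := (hconn a x).pos_dist_of_ne hax
    obtain ⟨u, hau, q, hq⟩ := SimpleGraph.Walk.exists_eq_cons_of_ne hax (p₁.takeUntil x hx1)
    have hqp : q.IsPath := by
      have := hp₁.takeUntil hx1
      rw [hq] at this
      exact this.of_cons
    have hql : q.length = G.dist u x := path_length_eq_dist hconn hacyc q hqp
    have hql' : q.length + 1 = G.dist a x := by
      have : (p₁.takeUntil x hx1).length = q.length + 1 := by rw [hq]; simp
      omega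
    have hdau : G.dist a u = 1 := SimpleGraph.dist_eq_one_iff_adj.2 hau
    have hu1 : G.dist u s₁ + 1 = d₁ := by
      have t1 : G.dist u s₁ ≤ G.dist u x + G.dist x s₁ := hconn.dist_triangle
      have t2 : d₁ ≤ G.dist a u + G.dist u s₁ := hconn.dist_triangle
      omega
    have hu2 : G.dist u s₂ + 1 = d₂ := by
      have t1 : G.dist u s₂ ≤ G.dist u x + G.dist x s₂ := hconn.dist_triangle
      have t2 : d₂ ≤ G.dist a u + G.dist u s₂ := hconn.dist_triangle
      omega
    have huy1 : u = y₁ :=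
      parent_unique hconn hacyc s₁ hau.symm hy1.symm
        (comm_aux (by omega)) (comm_aux (by omega))
    have huy2 : u = y₂ :=
      parent_unique hconn hacyc s₂ hau.symm hy2.symm
        (comm_aux (by omega)) (comm_aux (by omega))
    exact hne (huy1 ▸ huy2)
  set P : G.Walk s₁ s₂ := p₁.reverse.append p₂ with hP
  have hPpath : P.IsPath := by
    rw [SimpleGraph.Walk.isPath_def, SimpleGraph.Walk.support_append]
    rw [List.nodup_append]
    refine ⟨by rw [SimpleGraph.Walk.support_reverse]; exact List.nodup_reverse.2 hp₁.support_nodup, ?_, ?_⟩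
    · have h2 := hp₂.support_nodup
      rw [p₂.support_eq_cons] at h2
      exact h2.of_cons
    · intro x hx1 y hx2 hxy
      subst hxy
      have hxp1 : x ∈ p₁.support := by
        rwa [SimpleGraph.Walk.support_reverse, List.mem_reverse] at hx1
      have hxp2 : x ∈ p₂.support := by
        rw [p₂.support_eq_cons]; exact List.mem_cons_of_mem _ hx2
      have hxa : x = a := hdisj x hxp1 hxp2
      have h2 := hp₂.support_nodup
      rw [p₂.support_eq_cons, List.nodup_cons] at h2
      exact h2.1 (hxa ▸ hx2)
  have hPlen : P.length = d₁ + d₂ := by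
    rw [hP, SimpleGraph.Walk.length_append, SimpleGraph.Walk.length_reverse, hlen₁, hlen₂]
  have hD : G.dist s₁ s₂ = d₁ + d₂ := by
    rw [← path_length_eq_dist hconn hacyc P hPpath]; exact hPlen
  have hfd1 : G.dist (f a) s₁ = d₁ := by
    rw [← hf1, SimpleGraph.dist_comm, iso_dist hconn f, SimpleGraph.dist_comm]
  have hfd2 : G.dist (f a) s₂ = d₂ := by
    rw [← hf2, SimpleGraph.dist_comm, iso_dist hconn f, SimpleGraph.dist_comm]
  obtain ⟨q₁, hq₁, hqlen₁⟩ := (hconn (f a) s₁).exists_path_of_dist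
  obtain ⟨q₂, hq₂, hqlen₂⟩ := (hconn (f a) s₂).exists_path_of_dist
  set Q : G.Walk s₁ s₂ := q₁.reverse.append q₂ with hQ
  have hQlen : Q.length = d₁ + d₂ := by
    rw [hQ, SimpleGraph.Walk.length_append, SimpleGraph.Walk.length_reverse,
      hqlen₁, hqlen₂, hfd1, hfd2]
  have hQpath : Q.IsPath := Q.isPath_of_length_eq_dist (by rw [hQlen, hD])
  have hPQ : P = Q :=
    congrArg Subtype.val (hacyc.path_unique ⟨P, hPpath⟩ ⟨Q, hQpath⟩)
  have hPa : P.getVert d₁ = a := by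
    rw [hP, SimpleGraph.Walk.getVert_append]
    rw [SimpleGraph.Walk.length_reverse, hlen₁]
    simp [← hd₁]
  have hQa : Q.getVert d₁ = f a := by
    rw [hQ, SimpleGraph.Walk.getVert_append]
    rw [SimpleGraph.Walk.length_reverse, hqlen₁, hfd1]
    simp
  rw [← hQa, ← hPQ, hPa]

end
end TreeOrbitAux

/-- In a connected acyclic simple graph all of whose vertices have countably infinite
degree: if the orbit of a vertex `a` under automorphisms fixing a finite set `S`
pointwise is infinite, then there is a neighbor `b` of `a` such that the orbit of `a`
under automorphisms fixing `b` and `S` pointwise is still infinite. -/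
theorem tree_orbit_infinite_exists_neighbor {V : Type*} (G : SimpleGraph V)
    (hconn : G.Connected) (hacyc : G.IsAcyclic)
    (hdeg : ∀ v : V, Countable (G.neighborSet v) ∧ Infinite (G.neighborSet v))
    (a : V) (S : Finset V)
    (horb : {x : V | ∃ f : G ≃g G, (∀ s ∈ S, f s = s) ∧ f a = x}.Infinite) :
    ∃ b : V, G.Adj a b ∧
      {x : V | ∃ f : G ≃g G, f b = b ∧ (∀ s ∈ S, f s = s) ∧ f a = x}.Infinite := by
  classical
  by_cases haS : a ∈ S
  · exfalso
    have hsub : {x : V | ∃ f : G ≃g G, (∀ s ∈ S, f s = s) ∧ f a = x} ⊆ {a} := by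
      rintro x ⟨f, hfix, rfl⟩
      simp [hfix a haS]
    exact ((Set.finite_singleton a).subset hsub).not_infinite horb
  have hgate : ∀ s ∈ S, ∃ y, G.Adj a y ∧ G.dist y s + 1 = G.dist a s := by
    intro s hs
    have hsa : a ≠ s := fun h => haS (h ▸ hs)
    obtain ⟨p, hp, hlen⟩ := (hconn a s).exists_path_of_dist
    obtain ⟨u, hau, q, hq⟩ := SimpleGraph.Walk.exists_eq_cons_of_ne hsa p
    have hqp : q.IsPath := by
      rw [hq] at hp
      exact hp.of_cons
    refine ⟨u, hau, ?_⟩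
    have h1 : q.length = G.dist u s := TreeOrbitAux.path_length_eq_dist hconn hacyc q hqp
    have h2 : p.length = q.length + 1 := by rw [hq]; simp
    omega
  choose! y hy1 hy2 using hgate
  by_cases hsame : ∃ b, G.Adj a b ∧ ∀ s ∈ S, y s = b
  · obtain ⟨b, hab, hall⟩ := hsame
    refine ⟨b, hab, ?_⟩
    apply TreeOrbitAux.master hdeg hconn hacyc a b hab S
    intro s hs
    have h3 := hy2 s hs
    rw [hall s hs] at h3
    exact h3
  · exfalso
    have hSne : S.Nonempty := by
      rcases Finset.eq_empty_or_nonempty S with rfl | h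
      · exfalso
        haveI := (hdeg a).2
        obtain ⟨b, hb⟩ := (inferInstance : Nonempty (G.neighborSet a))
        exact hsame ⟨b, hb, by simp⟩
      · exact h
    obtain ⟨s₀, hs₀⟩ := hSne
    push_neg at hsame
    obtain ⟨s₁, hs₁, hne⟩ := hsame (y s₀) (hy1 s₀ hs₀)
    have hsub : {x : V | ∃ f : G ≃g G, (∀ s ∈ S, f s = s) ∧ f a = x} ⊆ {a} := by
      rintro x ⟨f, hfix, rfl⟩
      have := TreeOrbitAux.fixed_of_two_gates hconn hacyc f (hfix s₁ hs₁) (hfix s₀ hs₀)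
        (hy1 s₁ hs₁) (hy1 s₀ hs₀) hne (hy2 s₁ hs₁) (hy2 s₀ hs₀)
      simp [this]
    exact ((Set.finite_singleton a).subset hsub).not_infinite horb
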